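/- Brauer's theorem: Let M ∈ ℂ^{n×n} have eigenvalues λ₁,…,λ_n (with multiplicity), let v be a right eigenvector of M for λ_k (M v = λ_k v, v ≠ 0), and let q ∈ ℂⁿ be arbitrary. Then the eigenvalues of M + v qᵀ are λ₁, …, λ_{k−1}, λ_k + qᵀv, λ_{k+1}, …, λ_n. -/

import Mathlib

open Matrix Polynomial

lemma eval_charpoly' {n : ℕ} (A : Matrix (Fin n) (Fin n) ℂ) (x : ℂ) :
    (A.charpoly).eval x = (x • (1 : Matrix (Fin n) (Fin n) ℂ) - A).det := by
  rw [Matrix.charpoly, ← Polynomial.coe_evalRingHom, RingHom.map_det]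
  congr 1
  ext i j
  by_cases h : i = j <;>
    simp [charmatrix_apply, h, Matrix.smul_apply, Matrix.one_apply, Matrix.diagonal_apply]

theorem stmt_8 (n : ℕ) (M : Matrix (Fin n) (Fin n) ℂ)
    (v : Fin n → ℂ) (hv : v ≠ 0) (lam : ℂ) (hev : M.mulVec v = lam • v)
    (q : Fin n → ℂ) :
    (M + Matrix.vecMulVec v q).charpoly * (X - C lam) =
      M.charpoly * (X - C (lam + q ⬝ᵥ v)) := by
  have hp0 : (M.charpoly * (X - C lam)) ≠ 0 :=
    (M.charpoly_monic.mul (monic_X_sub_C lam)).ne_zero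
  apply Polynomial.eq_of_infinite_eval_eq
  apply Set.Infinite.mono (s := {x : ℂ | ¬ IsRoot (M.charpoly * (X - C lam)) x})
  swap
  · simpa [Set.compl_setOf] using (Polynomial.finite_setOf_isRoot hp0).infinite_compl
  intro x hx
  simp only [Set.mem_setOf_eq]
  simp only [IsRoot, Set.mem_setOf_eq, eval_mul, eval_sub, eval_X, eval_C, mul_ne_zero_iff,
    sub_ne_zero] at hx
  obtain ⟨hdet, hxl⟩ := hx
  set A : Matrix (Fin n) (Fin n) ℂ := x • (1 : Matrix (Fin n) (Fin n) ℂ) - M with hA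
  have hdetA : A.det ≠ 0 := by rwa [eval_charpoly'] at hdet
  have hAunit : IsUnit A.det := isUnit_iff_ne_zero.mpr hdetA
  have hc : x - lam ≠ 0 := sub_ne_zero.mpr hxl
  -- A *ᵥ v = (x - lam) • v
  have hAv : A *ᵥ v = (x - lam) • v := by
    rw [hA, Matrix.sub_mulVec, Matrix.smul_mulVec, Matrix.one_mulVec, hev, sub_smul]
  have hAinv : A⁻¹ *ᵥ v = (x - lam)⁻¹ • v := by
    have h1 : A⁻¹ *ᵥ (A *ᵥ v) = v := by
      rw [Matrix.mulVec_mulVec, Matrix.nonsing_inv_mul A hAunit, Matrix.one_mulVec]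
    rw [hAv, Matrix.mulVec_smul] at h1
    rw [eq_comm, inv_smul_eq_iff₀ hc, h1]
  simp only [eval_mul, eval_sub, eval_X, eval_C]
  rw [eval_charpoly', eval_charpoly']
  have key : x • (1 : Matrix (Fin n) (Fin n) ℂ) - (M + Matrix.vecMulVec v q)
      = A + Matrix.replicateCol Unit (-v) * Matrix.replicateRow Unit q := by
    rw [← Matrix.vecMulVec_eq Unit]
    rw [hA]
    ext i j
    simp [Matrix.vecMulVec_apply, sub_add_eq_sub_sub]
    ring
  rw [key, Matrix.det_add_replicateCol_mul_replicateRow hAunit]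
  have h11 : (1 + Matrix.replicateRow Unit q * A⁻¹ * Matrix.replicateCol Unit (-v)).det
      = 1 - (x - lam)⁻¹ * (q ⬝ᵥ v) := by
    rw [Matrix.det_unique, Matrix.mul_assoc, ← Matrix.replicateCol_mulVec, Matrix.add_apply,
      Matrix.one_apply_eq, Matrix.replicateRow_mul_replicateCol_apply]
    simp [Matrix.mulVec_neg, hAinv, dotProduct_neg, dotProduct_smul, smul_eq_mul]
    ring
  have h2 : (1 - (x - lam)⁻¹ * (q ⬝ᵥ v)) * (x - lam) = x - (lam + q ⬝ᵥ v) := by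
    field_simp
    ring
  rw [h11, mul_assoc, h2]
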